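/- Let P₀ and P₁ be probability measures on ℝ with finite second moments and quantile functions F₀⁻¹, F₁⁻¹. For every coupling J of P₀ and P₁, ∫ (y₁ − y₀)² dJ(y₀, y₁) ≤ ∫₀¹ (F₁⁻¹(u) − F₀⁻¹(1 − u))² du, and equality holds when J is the antitone coupling, the pushforward of Lebesgue measure on (0,1) under u ↦ (F₀⁻¹(1 − u), F₁⁻¹(u)). That is, the antitone coupling maximizes the quadratic treatment effect E[(Y₁ − Y₀)²] over all couplings. -/

import Mathlib

open MeasureTheory Set Filter
open scoped ENNReal

noncomputable def cdf (P : MeasureTheory.Measure ℝ) (y : ℝ) : ℝ := (P (Set.Iic y)).toReal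

noncomputable def quantile (P : MeasureTheory.Measure ℝ) (u : ℝ) : ℝ :=
  sInf {y : ℝ | u ≤ cdf P y}

section aux
variable (P : Measure ℝ) [IsProbabilityMeasure P]

lemma cdf_eq' : cdf P = fun y => ProbabilityTheory.cdf P y := by
  funext y; rw [cdf, ProbabilityTheory.cdf_eq_real, measureReal_def]

lemma cdf_mono : Monotone (cdf P) := by
  rw [cdf_eq']; exact fun a b hab => ProbabilityTheory.monotone_cdf P hab

omit [IsProbabilityMeasure P] in
lemma cdf_nonneg' (y : ℝ) : 0 ≤ cdf P y := ENNReal.toReal_nonneg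

lemma cdf_le_one' (y : ℝ) : cdf P y ≤ 1 := by
  rw [cdf_eq']; exact ProbabilityTheory.cdf_le_one P y

lemma ofReal_cdf' (y : ℝ) : ENNReal.ofReal (cdf P y) = P (Iic y) :=
  ENNReal.ofReal_toReal (measure_ne_top P _)

lemma ofReal_one_sub_cdf (y : ℝ) : ENNReal.ofReal (1 - cdf P y) = P (Ioi y) := by
  have h1 : P (Ioi y) = 1 - P (Iic y) := by
    rw [← compl_Iic, measure_compl measurableSet_Iic (measure_ne_top P _), measure_univ]
  have h2 : (1 - P (Iic y)).toReal = 1 - cdf P y := by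
    rw [ENNReal.toReal_sub_of_le prob_le_one ENNReal.one_ne_top]
    simp [cdf]
  rw [h1, ← h2, ENNReal.ofReal_toReal]
  exact (tsub_le_self.trans_lt ENNReal.one_lt_top).ne

variable {P}

lemma quantile_le_iff {u y : ℝ} (h0 : 0 < u) (h1 : u < 1) :
    quantile P u ≤ y ↔ u ≤ cdf P y := by
  set S := {y : ℝ | u ≤ cdf P y} with hS
  have hne : S.Nonempty := by
    have : ∀ᶠ z in atTop, u < cdf P z := by
      rw [cdf_eq']
      exact (ProbabilityTheory.tendsto_cdf_atTop P).eventually (eventually_gt_nhds h1)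
    obtain ⟨z, hz⟩ := this.exists
    exact ⟨z, hz.le⟩
  have hbdd : BddBelow S := by
    have : ∀ᶠ z in atBot, cdf P z < u := by
      rw [cdf_eq']
      exact (ProbabilityTheory.tendsto_cdf_atBot P).eventually (eventually_lt_nhds h0)
    obtain ⟨z, hz⟩ := this.exists
    refine ⟨z, fun w hw => ?_⟩
    by_contra hwz
    exact absurd (hw.trans (cdf_mono P (le_of_not_ge hwz))) (not_le.mpr hz)
  have hmem : u ≤ cdf P (sInf S) := by
    have hev : ∀ᶠ z in nhdsWithin (sInf S) (Ioi (sInf S)), u ≤ cdf P z := by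
      filter_upwards [self_mem_nhdsWithin] with z hz
      obtain ⟨s, hsS, hs⟩ := (csInf_lt_iff hbdd hne).mp hz
      exact hsS.trans (cdf_mono P hs.le)
    have hcont : ContinuousWithinAt (cdf P) (Ioi (sInf S)) (sInf S) := by
      rw [cdf_eq']
      exact ((ProbabilityTheory.cdf P).right_continuous (sInf S)).mono Ioi_subset_Ici_self
    exact ge_of_tendsto hcont hev
  constructor
  · intro h
    exact hmem.trans (cdf_mono P h)
  · intro h
    exact csInf_le hbdd h

lemma lt_quantile_iff {u y : ℝ} (h0 : 0 < u) (h1 : u < 1) :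
    y < quantile P u ↔ cdf P y < u := by
  rw [← not_le, ← not_le, quantile_le_iff h0 h1]

end aux

section meas
variable (P : Measure ℝ) [IsProbabilityMeasure P]

open Classical in
lemma measurable_quantile_trunc :
    Measurable (fun u : ℝ => if u ∈ Ioo (0:ℝ) 1 then quantile P u else 0) := by
  apply measurable_of_Iic
  intro c
  have : (fun u : ℝ => if u ∈ Ioo (0:ℝ) 1 then quantile P u else 0) ⁻¹' Iic c
      = (Ioo (0:ℝ) 1 ∩ Iic (cdf P c)) ∪ ((Ioo (0:ℝ) 1)ᶜ ∩ {u : ℝ | (0:ℝ) ≤ c}) := by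
    ext u
    by_cases hu : u ∈ Ioo (0:ℝ) 1
    · simp only [mem_preimage, mem_Iic, if_pos hu, mem_union, mem_inter_iff, hu, mem_compl_iff,
        not_true, false_and, or_false, true_and, mem_setOf_eq]
      exact quantile_le_iff hu.1 hu.2
    · simp only [mem_preimage, mem_Iic, if_neg hu, mem_union, mem_inter_iff, hu, mem_compl_iff,
        not_false_iff, true_and, false_and, false_or, mem_setOf_eq]
      exact Iff.symm (by norm_num)
  rw [this]
  refine (measurableSet_Ioo.inter measurableSet_Iic).union
    (measurableSet_Ioo.compl.inter ?_)
  exact MeasurableSet.const _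

lemma aemeasurable_quantile :
    AEMeasurable (quantile P) (volume.restrict (Ioo (0:ℝ) 1)) := by
  classical
  refine ⟨fun u => if u ∈ Ioo (0:ℝ) 1 then quantile P u else 0,
    measurable_quantile_trunc P, ?_⟩
  filter_upwards [ae_restrict_mem measurableSet_Ioo] with u hu
  simp [hu]

lemma measurePreserving_one_sub :
    MeasurePreserving (fun u : ℝ => 1 - u) (volume.restrict (Ioo (0:ℝ) 1))
      (volume.restrict (Ioo (0:ℝ) 1)) := by
  have h := Measure.measurePreserving_sub_left (volume : Measure ℝ) 1
  have hpre : (fun u : ℝ => 1 - u) ⁻¹' (Ioo (0:ℝ) 1) = Ioo (0:ℝ) 1 := by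
    ext u; simp only [mem_preimage, mem_Ioo]; constructor <;> intro ⟨a, b⟩ <;>
      constructor <;> linarith
  have := h.restrict_preimage (measurableSet_Ioo (a := (0:ℝ)) (b := 1))
  rwa [hpre] at this

lemma aemeasurable_quantile_one_sub :
    AEMeasurable (fun u => quantile P (1 - u)) (volume.restrict (Ioo (0:ℝ) 1)) := by
  exact (aemeasurable_quantile P).comp_quasiMeasurePreserving
    measurePreserving_one_sub.quasiMeasurePreserving

lemma map_quantile_eq : (volume.restrict (Ioo (0:ℝ) 1)).map (quantile P) = P := by
  have hIoo : (volume.restrict (Ioo (0:ℝ) 1)) (univ : Set ℝ) = 1 := by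
    simp [Real.volume_Ioo]
  haveI : IsProbabilityMeasure (volume.restrict (Ioo (0:ℝ) 1)) := ⟨hIoo⟩
  haveI : IsProbabilityMeasure ((volume.restrict (Ioo (0:ℝ) 1)).map (quantile P)) :=
    Measure.isProbabilityMeasure_map (aemeasurable_quantile P)
  refine Measure.ext_of_Iic _ _ (fun y => ?_)
  rw [Measure.map_apply_of_aemeasurable (aemeasurable_quantile P) measurableSet_Iic,
    Measure.restrict_apply' measurableSet_Ioo]
  have hset : quantile P ⁻¹' Iic y ∩ Ioo (0:ℝ) 1 = Iic (cdf P y) ∩ Ioo (0:ℝ) 1 := by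
    ext u
    simp only [mem_inter_iff, mem_preimage, mem_Iic, mem_Ioo, and_congr_left_iff]
    intro hu
    exact quantile_le_iff hu.1 hu.2
  rw [hset]
  have hc0 : 0 ≤ cdf P y := ENNReal.toReal_nonneg
  have hc1 : cdf P y ≤ 1 := by
    rw [cdf]; exact ENNReal.toReal_le_of_le_ofReal one_pos.le (by simpa using prob_le_one)
  rcases lt_or_ge (cdf P y) 1 with h | h
  · have : Iic (cdf P y) ∩ Ioo (0:ℝ) 1 = Ioc 0 (cdf P y) := by
      ext u
      simp only [mem_inter_iff, mem_Iic, mem_Ioo, mem_Ioc]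
      constructor
      · rintro ⟨a, b, _⟩; exact ⟨b, a⟩
      · rintro ⟨a, b⟩; exact ⟨b, a, lt_of_le_of_lt b h⟩
    rw [this, Real.volume_Ioc, cdf, sub_zero, ENNReal.ofReal_toReal (measure_ne_top P _)]
  · have h1 : cdf P y = 1 := le_antisymm hc1 h
    have : Iic (cdf P y) ∩ Ioo (0:ℝ) 1 = Ioo (0:ℝ) 1 := by
      rw [h1]; ext u; simp only [mem_inter_iff, mem_Iic, mem_Ioo]
      exact ⟨fun h => h.2, fun h => ⟨h.2.le, h⟩⟩
    rw [this, Real.volume_Ioo, sub_zero, ← h1, cdf,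
      ENNReal.ofReal_toReal (measure_ne_top P _)]

end meas

lemma interval_mem_iff (x y s t : ℝ) :
    ((min x y ≤ s ∧ s < max x y) ∧ (min x y ≤ t ∧ t < max x y)) ↔
    ((x ≤ min s t ∧ max s t < y) ∨ (y ≤ min s t ∧ max s t < x)) := by
  rcases le_total x y with h | h
  · rw [min_eq_left h, max_eq_right h]
    constructor
    · rintro ⟨⟨a, b⟩, c, d⟩; exact Or.inl ⟨le_min a c, max_lt b d⟩
    · rintro (⟨a, b⟩ | ⟨a, b⟩)
      · exact ⟨⟨a.trans (min_le_left s t), (le_max_left s t).trans_lt b⟩,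
          a.trans (min_le_right s t), (le_max_right s t).trans_lt b⟩
      · exact absurd (((a.trans (min_le_max)).trans_lt b).trans_le h) (lt_irrefl y)
  · rw [min_eq_right h, max_eq_left h]
    constructor
    · rintro ⟨⟨a, b⟩, c, d⟩; exact Or.inr ⟨le_min a c, max_lt b d⟩
    · rintro (⟨a, b⟩ | ⟨a, b⟩)
      · exact absurd (((a.trans (min_le_max)).trans_lt b).trans_le h) (lt_irrefl x)
      · exact ⟨⟨a.trans (min_le_left s t), (le_max_left s t).trans_lt b⟩,
          a.trans (min_le_right s t), (le_max_right s t).trans_lt b⟩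

/-- The auxiliary product set used for the square-expansion identity. -/
def Tset : Set ((ℝ × ℝ) × (ℝ × ℝ)) :=
  {q | (min q.1.1 q.1.2 ≤ q.2.1 ∧ q.2.1 < max q.1.1 q.1.2) ∧
       (min q.1.1 q.1.2 ≤ q.2.2 ∧ q.2.2 < max q.1.1 q.1.2)}

lemma measurableSet_Tset : MeasurableSet Tset := by
  have h1 : Measurable (fun q : (ℝ × ℝ) × (ℝ × ℝ) => min q.1.1 q.1.2) :=
    measurable_fst.fst.min measurable_fst.snd
  have h2 : Measurable (fun q : (ℝ × ℝ) × (ℝ × ℝ) => max q.1.1 q.1.2) :=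
    measurable_fst.fst.max measurable_fst.snd
  exact ((measurableSet_le h1 measurable_snd.fst).inter
      (measurableSet_lt measurable_snd.fst h2)).inter
      ((measurableSet_le h1 measurable_snd.snd).inter
        (measurableSet_lt measurable_snd.snd h2))

lemma lintegral_Tset_left (p : ℝ × ℝ) :
    (∫⁻ z : ℝ × ℝ, Tset.indicator 1 (p, z)) = ENNReal.ofReal ((p.2 - p.1) ^ 2) := by
  have hiff : ∀ z : ℝ × ℝ, ((p, z) ∈ Tset ↔
      z ∈ (Ico (min p.1 p.2) (max p.1 p.2) ×ˢ Ico (min p.1 p.2) (max p.1 p.2))) := by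
    intro z
    simp only [Tset, mem_setOf_eq, mem_prod, mem_Ico]
  have heq : (fun z : ℝ × ℝ => Tset.indicator 1 (p, z))
      = (Ico (min p.1 p.2) (max p.1 p.2) ×ˢ Ico (min p.1 p.2) (max p.1 p.2)).indicator
          (1 : ℝ × ℝ → ℝ≥0∞) := by
    funext z
    by_cases h : z ∈ Ico (min p.1 p.2) (max p.1 p.2) ×ˢ Ico (min p.1 p.2) (max p.1 p.2)
    · rw [indicator_of_mem ((hiff z).mpr h), indicator_of_mem h]; rfl
    · rw [indicator_of_notMem (fun hc => h ((hiff z).mp hc)), indicator_of_notMem h]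
  rw [heq, lintegral_indicator_one (measurableSet_Ico.prod measurableSet_Ico),
    Measure.volume_eq_prod, Measure.prod_prod, Real.volume_Ico, max_sub_min_eq_abs,
    ← ENNReal.ofReal_mul (abs_nonneg _), abs_mul_abs_self]
  congr 1; ring

lemma lintegral_Tset_right (ν : Measure (ℝ × ℝ)) (z : ℝ × ℝ) :
    (∫⁻ p : ℝ × ℝ, Tset.indicator 1 (p, z) ∂ν)
      = ν ((Iic (min z.1 z.2) ×ˢ Ioi (max z.1 z.2)) ∪
          (Ioi (max z.1 z.2) ×ˢ Iic (min z.1 z.2))) := by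
  have hiff : ∀ p : ℝ × ℝ, ((p, z) ∈ Tset ↔
      p ∈ (Iic (min z.1 z.2) ×ˢ Ioi (max z.1 z.2)) ∪
        (Ioi (max z.1 z.2) ×ˢ Iic (min z.1 z.2))) := by
    intro p
    simp only [Tset, mem_setOf_eq, mem_union, mem_prod, mem_Iic, mem_Ioi]
    rw [interval_mem_iff p.1 p.2 z.1 z.2]
    tauto
  have heq : (fun p : ℝ × ℝ => Tset.indicator 1 (p, z))
      = ((Iic (min z.1 z.2) ×ˢ Ioi (max z.1 z.2)) ∪
          (Ioi (max z.1 z.2) ×ˢ Iic (min z.1 z.2))).indicator (1 : ℝ × ℝ → ℝ≥0∞) := by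
    funext p
    by_cases h : p ∈ (Iic (min z.1 z.2) ×ˢ Ioi (max z.1 z.2)) ∪
        (Ioi (max z.1 z.2) ×ˢ Iic (min z.1 z.2))
    · rw [indicator_of_mem ((hiff p).mpr h), indicator_of_mem h]; rfl
    · rw [indicator_of_notMem (fun hc => h ((hiff p).mp hc)), indicator_of_notMem h]
  rw [heq, lintegral_indicator_one
    ((measurableSet_Iic.prod measurableSet_Ioi).union
      (measurableSet_Ioi.prod measurableSet_Iic))]

lemma coupling_lintegral_eq (ν : Measure (ℝ × ℝ)) [IsProbabilityMeasure ν] :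
    ∫⁻ p : ℝ × ℝ, ENNReal.ofReal ((p.2 - p.1) ^ 2) ∂ν
      = ∫⁻ z : ℝ × ℝ, ν ((Iic (min z.1 z.2) ×ˢ Ioi (max z.1 z.2)) ∪
          (Ioi (max z.1 z.2) ×ˢ Iic (min z.1 z.2))) := by
  have hmeas : AEMeasurable (Function.uncurry fun (p z : ℝ × ℝ) =>
      Tset.indicator (1 : (ℝ × ℝ) × (ℝ × ℝ) → ℝ≥0∞) (p, z)) (ν.prod volume) := by
    have h : (Function.uncurry fun (p z : ℝ × ℝ) =>
        Tset.indicator (1 : (ℝ × ℝ) × (ℝ × ℝ) → ℝ≥0∞) (p, z))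
        = Tset.indicator 1 := by
      funext q; simp [Function.uncurry]
    rw [h]
    exact (measurable_one.indicator measurableSet_Tset).aemeasurable
  calc ∫⁻ p : ℝ × ℝ, ENNReal.ofReal ((p.2 - p.1) ^ 2) ∂ν
      = ∫⁻ p : ℝ × ℝ, (∫⁻ z : ℝ × ℝ, Tset.indicator 1 (p, z)) ∂ν :=
        lintegral_congr fun p => (lintegral_Tset_left p).symm
    _ = ∫⁻ z : ℝ × ℝ, (∫⁻ p : ℝ × ℝ, Tset.indicator 1 (p, z) ∂ν) := by
        exact lintegral_lintegral_swap hmeas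
    _ = _ := lintegral_congr (lintegral_Tset_right ν)

section jstar
variable (P0 P1 : Measure ℝ) [IsProbabilityMeasure P0] [IsProbabilityMeasure P1]

lemma aemeasurable_antitone :
    AEMeasurable (fun u => (quantile P0 (1 - u), quantile P1 u))
      (volume.restrict (Ioo (0:ℝ) 1)) :=
  (aemeasurable_quantile_one_sub P0).prodMk (aemeasurable_quantile P1)

lemma jstar_S1 (m M : ℝ) :
    ((volume.restrict (Ioo (0:ℝ) 1)).map (fun u => (quantile P0 (1 - u), quantile P1 u)))
        (Iic m ×ˢ Ioi M)
      = min (P0 (Iic m)) (P1 (Ioi M)) := by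
  rw [Measure.map_apply_of_aemeasurable (aemeasurable_antitone P0 P1)
      (measurableSet_Iic.prod measurableSet_Ioi),
    Measure.restrict_apply' measurableSet_Ioo]
  set a : ℝ := 1 - cdf P0 m with ha
  set b : ℝ := cdf P1 M with hb
  have ha0 : 0 ≤ a := by have := cdf_le_one' P0 m; linarith
  have hb0 : 0 ≤ b := cdf_nonneg' P1 M
  have ha1 : a ≤ 1 := by have := cdf_nonneg' P0 m; linarith
  have hb1 : b ≤ 1 := cdf_le_one' P1 M
  have hset : (fun u => (quantile P0 (1 - u), quantile P1 u)) ⁻¹' (Iic m ×ˢ Ioi M)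
      ∩ Ioo (0:ℝ) 1 = {u : ℝ | a ≤ u ∧ b < u} ∩ Ioo (0:ℝ) 1 := by
    ext u
    simp only [mem_inter_iff, mem_preimage, mem_prod, mem_Iic, mem_Ioi, mem_setOf_eq,
      and_congr_left_iff, mem_Ioo]
    intro hu
    have h1u : 0 < 1 - u := by linarith [hu.2]
    have h1u' : 1 - u < 1 := by linarith [hu.1]
    rw [quantile_le_iff h1u h1u', lt_quantile_iff hu.1 hu.2]
    constructor
    · rintro ⟨h1, h2⟩; exact ⟨by linarith, h2⟩
    · rintro ⟨h1, h2⟩; exact ⟨by linarith, h2⟩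
  rw [hset]
  rcases le_or_gt a b with hab | hab
  · have hseq : {u : ℝ | a ≤ u ∧ b < u} ∩ Ioo (0:ℝ) 1 = Ioo b 1 := by
      ext u
      simp only [mem_inter_iff, mem_setOf_eq, mem_Ioo]
      constructor
      · rintro ⟨⟨h1, h2⟩, h3, h4⟩; exact ⟨h2, h4⟩
      · rintro ⟨h1, h2⟩; exact ⟨⟨by linarith, h1⟩, by linarith, h2⟩
    have hmin : min (P0 (Iic m)) (P1 (Ioi M)) = P1 (Ioi M) := by
      rw [← ofReal_cdf' P0 m, ← ofReal_one_sub_cdf P1 M]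
      exact min_eq_right (ENNReal.ofReal_le_ofReal (by linarith))
    rw [hseq, Real.volume_Ioo, hmin, ← ofReal_one_sub_cdf P1 M]
  · have hseq : {u : ℝ | a ≤ u ∧ b < u} ∩ Ioo (0:ℝ) 1 = Ico a 1 := by
      ext u
      simp only [mem_inter_iff, mem_setOf_eq, mem_Ioo, mem_Ico]
      constructor
      · rintro ⟨⟨h1, h2⟩, h3, h4⟩; exact ⟨h1, h4⟩
      · rintro ⟨h1, h2⟩; exact ⟨⟨h1, by linarith⟩, by linarith, h2⟩
    have hmin : min (P0 (Iic m)) (P1 (Ioi M)) = P0 (Iic m) := by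
      rw [← ofReal_cdf' P0 m, ← ofReal_one_sub_cdf P1 M]
      exact min_eq_left (ENNReal.ofReal_le_ofReal (by linarith))
    rw [hseq, Real.volume_Ico, hmin, ← ofReal_cdf' P0 m]
    congr 1
    rw [ha]; ring

lemma jstar_S2 (m M : ℝ) :
    ((volume.restrict (Ioo (0:ℝ) 1)).map (fun u => (quantile P0 (1 - u), quantile P1 u)))
        (Ioi M ×ˢ Iic m)
      = min (P0 (Ioi M)) (P1 (Iic m)) := by
  rw [Measure.map_apply_of_aemeasurable (aemeasurable_antitone P0 P1)
      (measurableSet_Ioi.prod measurableSet_Iic),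
    Measure.restrict_apply' measurableSet_Ioo]
  set a : ℝ := 1 - cdf P0 M with ha
  set b : ℝ := cdf P1 m with hb
  have ha0 : 0 ≤ a := by have := cdf_le_one' P0 M; linarith
  have hb0 : 0 ≤ b := cdf_nonneg' P1 m
  have ha1 : a ≤ 1 := by have := cdf_nonneg' P0 M; linarith
  have hb1 : b ≤ 1 := cdf_le_one' P1 m
  have hset : (fun u => (quantile P0 (1 - u), quantile P1 u)) ⁻¹' (Ioi M ×ˢ Iic m)
      ∩ Ioo (0:ℝ) 1 = {u : ℝ | u < a ∧ u ≤ b} ∩ Ioo (0:ℝ) 1 := by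
    ext u
    simp only [mem_inter_iff, mem_preimage, mem_prod, mem_Iic, mem_Ioi, mem_setOf_eq,
      and_congr_left_iff, mem_Ioo]
    intro hu
    have h1u : 0 < 1 - u := by linarith [hu.2]
    have h1u' : 1 - u < 1 := by linarith [hu.1]
    rw [lt_quantile_iff h1u h1u', quantile_le_iff hu.1 hu.2]
    constructor
    · rintro ⟨h1, h2⟩; exact ⟨by linarith, h2⟩
    · rintro ⟨h1, h2⟩; exact ⟨by linarith, h2⟩
  rw [hset]
  rcases le_or_gt a b with hab | hab
  · have hseq : {u : ℝ | u < a ∧ u ≤ b} ∩ Ioo (0:ℝ) 1 = Ioo 0 a := by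
      ext u
      simp only [mem_inter_iff, mem_setOf_eq, mem_Ioo]
      constructor
      · rintro ⟨⟨h1, h2⟩, h3, h4⟩; exact ⟨h3, h1⟩
      · rintro ⟨h1, h2⟩; exact ⟨⟨h2, by linarith⟩, h1, by linarith⟩
    have hmin : min (P0 (Ioi M)) (P1 (Iic m)) = P0 (Ioi M) := by
      rw [← ofReal_one_sub_cdf P0 M, ← ofReal_cdf' P1 m]
      exact min_eq_left (ENNReal.ofReal_le_ofReal (by linarith))
    rw [hseq, Real.volume_Ioo, hmin, ← ofReal_one_sub_cdf P0 M, sub_zero]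
  · have hseq : {u : ℝ | u < a ∧ u ≤ b} ∩ Ioo (0:ℝ) 1 = Ioc 0 b := by
      ext u
      simp only [mem_inter_iff, mem_setOf_eq, mem_Ioo, mem_Ioc]
      constructor
      · rintro ⟨⟨h1, h2⟩, h3, h4⟩; exact ⟨h3, h2⟩
      · rintro ⟨h1, h2⟩; exact ⟨⟨by linarith, h2⟩, h1, by linarith⟩
    have hmin : min (P0 (Ioi M)) (P1 (Iic m)) = P1 (Iic m) := by
      rw [← ofReal_one_sub_cdf P0 M, ← ofReal_cdf' P1 m]
      exact min_eq_right (ENNReal.ofReal_le_ofReal (by linarith))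
    rw [hseq, Real.volume_Ioc, hmin, ← ofReal_cdf' P1 m, sub_zero]
end jstar


section main
variable (P0 P1 : Measure ℝ) [IsProbabilityMeasure P0] [IsProbabilityMeasure P1]

lemma measurable_sq_diff : Measurable (fun p : ℝ × ℝ => ENNReal.ofReal ((p.2 - p.1) ^ 2)) :=
  ((measurable_snd.sub measurable_fst).pow_const 2).ennreal_ofReal

lemma lintegral_jstar :
    (∫⁻ p : ℝ × ℝ, ENNReal.ofReal ((p.2 - p.1) ^ 2)
        ∂((volume.restrict (Ioo (0:ℝ) 1)).map (fun u => (quantile P0 (1 - u), quantile P1 u))))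
      = ∫⁻ u in Ioo (0:ℝ) 1,
          ENNReal.ofReal ((quantile P1 u - quantile P0 (1 - u)) ^ 2) :=
  lintegral_map' (measurable_sq_diff.aemeasurable) (aemeasurable_antitone P0 P1)

lemma lintegral_quantile_sq :
    (∫⁻ u in Ioo (0:ℝ) 1, ENNReal.ofReal ((quantile P1 u) ^ 2))
      = ∫⁻ y, ENNReal.ofReal (y ^ 2) ∂P1 := by
  conv_rhs => rw [← map_quantile_eq P1]
  exact (lintegral_map' ((measurable_id.pow_const 2).ennreal_ofReal.aemeasurable)
    (aemeasurable_quantile P1)).symm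

lemma lintegral_quantile_one_sub_sq :
    (∫⁻ u in Ioo (0:ℝ) 1, ENNReal.ofReal ((quantile P0 (1 - u)) ^ 2))
      = ∫⁻ y, ENNReal.ofReal (y ^ 2) ∂P0 := by
  have h1 : (∫⁻ u in Ioo (0:ℝ) 1, ENNReal.ofReal ((quantile P0 u) ^ 2))
      = ∫⁻ u in Ioo (0:ℝ) 1, ENNReal.ofReal ((quantile P0 (1 - u)) ^ 2) := by
    conv_lhs => rw [← measurePreserving_one_sub.map_eq]
    refine lintegral_map' ?_ ((measurable_const.sub measurable_id).aemeasurable)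
    rw [measurePreserving_one_sub.map_eq]
    exact ((measurable_id.pow_const 2).ennreal_ofReal).comp_aemeasurable
      (aemeasurable_quantile P0)
  rw [← h1]
  conv_rhs => rw [← map_quantile_eq P0]
  exact (lintegral_map' ((measurable_id.pow_const 2).ennreal_ofReal.aemeasurable)
    (aemeasurable_quantile P0)).symm

lemma lintegral_sq_moment_lt_top {P : Measure ℝ} (hm : Integrable (fun y : ℝ => y ^ 2) P) :
    (∫⁻ y, ENNReal.ofReal (y ^ 2) ∂P) < ⊤ := by
  have := hm.hasFiniteIntegral
  rw [HasFiniteIntegral] at this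
  refine lt_of_eq_of_lt ?_ this
  refine lintegral_congr fun y => ?_
  rw [← Real.enorm_eq_ofReal (sq_nonneg y)]

lemma lintegral_target_lt_top (hm0 : Integrable (fun y : ℝ => y ^ 2) P0)
    (hm1 : Integrable (fun y : ℝ => y ^ 2) P1) :
    (∫⁻ u in Ioo (0:ℝ) 1,
        ENNReal.ofReal ((quantile P1 u - quantile P0 (1 - u)) ^ 2)) < ⊤ := by
  have hb : ∀ u : ℝ, ENNReal.ofReal ((quantile P1 u - quantile P0 (1 - u)) ^ 2)
      ≤ 2 * ENNReal.ofReal ((quantile P1 u) ^ 2)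
        + 2 * ENNReal.ofReal ((quantile P0 (1 - u)) ^ 2) := by
    intro u
    set A := quantile P1 u
    set B := quantile P0 (1 - u)
    calc ENNReal.ofReal ((A - B) ^ 2) ≤ ENNReal.ofReal (2 * A ^ 2 + 2 * B ^ 2) :=
          ENNReal.ofReal_le_ofReal (by nlinarith [sq_nonneg (A + B)])
      _ = ENNReal.ofReal (2 * A ^ 2) + ENNReal.ofReal (2 * B ^ 2) :=
          ENNReal.ofReal_add (by positivity) (by positivity)
      _ = 2 * ENNReal.ofReal (A ^ 2) + 2 * ENNReal.ofReal (B ^ 2) := by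
          rw [ENNReal.ofReal_mul (by norm_num : (0:ℝ) ≤ 2),
            ENNReal.ofReal_mul (by norm_num : (0:ℝ) ≤ 2)]
          norm_num
  calc (∫⁻ u in Ioo (0:ℝ) 1, ENNReal.ofReal ((quantile P1 u - quantile P0 (1 - u)) ^ 2))
      ≤ ∫⁻ u in Ioo (0:ℝ) 1, (2 * ENNReal.ofReal ((quantile P1 u) ^ 2)
          + 2 * ENNReal.ofReal ((quantile P0 (1 - u)) ^ 2)) :=
        lintegral_mono fun u => hb u
    _ = 2 * (∫⁻ u in Ioo (0:ℝ) 1, ENNReal.ofReal ((quantile P1 u) ^ 2))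
          + 2 * ∫⁻ u in Ioo (0:ℝ) 1, ENNReal.ofReal ((quantile P0 (1 - u)) ^ 2) := by
        rw [lintegral_add_left' ?hl, lintegral_const_mul' 2 _ ENNReal.ofNat_ne_top,
          lintegral_const_mul' 2 _ ENNReal.ofNat_ne_top]
        case hl =>
          exact (((measurable_id.pow_const 2).ennreal_ofReal).comp_aemeasurable
            (aemeasurable_quantile P1)).const_mul 2
    _ < ⊤ := by
        rw [lintegral_quantile_sq, lintegral_quantile_one_sub_sq]
        exact ENNReal.add_lt_top.mpr ⟨ENNReal.mul_lt_top ENNReal.ofNat_lt_top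
            (lintegral_sq_moment_lt_top hm1),
          ENNReal.mul_lt_top ENNReal.ofNat_lt_top (lintegral_sq_moment_lt_top hm0)⟩

end main

/-- The antitone coupling maximizes the quadratic treatment effect over all couplings. -/
theorem antitone_maximizes_quadratic_effect
    (P0 P1 : Measure ℝ) [IsProbabilityMeasure P0] [IsProbabilityMeasure P1]
    (hm0 : Integrable (fun y : ℝ => y ^ 2) P0) (hm1 : Integrable (fun y : ℝ => y ^ 2) P1)
    (J : Measure (ℝ × ℝ)) [IsProbabilityMeasure J]
    (h0 : J.map Prod.fst = P0) (h1 : J.map Prod.snd = P1) :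
    ((∫ p : ℝ × ℝ, (p.2 - p.1) ^ 2 ∂J)
        ≤ ∫ u in Ioo (0:ℝ) 1, (quantile P1 u - quantile P0 (1 - u)) ^ 2) ∧
    (J = (volume.restrict (Ioo (0:ℝ) 1)).map
        (fun u => (quantile P0 (1 - u), quantile P1 u)) →
      (∫ p : ℝ × ℝ, (p.2 - p.1) ^ 2 ∂J)
        = ∫ u in Ioo (0:ℝ) 1, (quantile P1 u - quantile P0 (1 - u)) ^ 2) := by
  haveI : IsProbabilityMeasure (volume.restrict (Ioo (0:ℝ) 1)) :=
    ⟨by simp [Real.volume_Ioo]⟩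
  set Jstar : Measure (ℝ × ℝ) :=
    (volume.restrict (Ioo (0:ℝ) 1)).map (fun u => (quantile P0 (1 - u), quantile P1 u))
    with hJstar
  haveI : IsProbabilityMeasure Jstar :=
    Measure.isProbabilityMeasure_map (aemeasurable_antitone P0 P1)
  -- pointwise comparison of the rectangle-union measures
  have hcomp : ∀ z : ℝ × ℝ,
      J ((Iic (min z.1 z.2) ×ˢ Ioi (max z.1 z.2)) ∪
          (Ioi (max z.1 z.2) ×ˢ Iic (min z.1 z.2)))
      ≤ Jstar ((Iic (min z.1 z.2) ×ˢ Ioi (max z.1 z.2)) ∪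
          (Ioi (max z.1 z.2) ×ˢ Iic (min z.1 z.2))) := by
    intro z
    set m := min z.1 z.2 with hm
    set M := max z.1 z.2 with hM
    have hmM : m ≤ M := min_le_max
    have hJ1 : J (Iic m ×ˢ Ioi M) ≤ min (P0 (Iic m)) (P1 (Ioi M)) := by
      refine le_min ?_ ?_
      · rw [← h0, Measure.map_apply measurable_fst measurableSet_Iic]
        exact measure_mono fun p hp => hp.1
      · rw [← h1, Measure.map_apply measurable_snd measurableSet_Ioi]
        exact measure_mono fun p hp => hp.2
    have hJ2 : J (Ioi M ×ˢ Iic m) ≤ min (P0 (Ioi M)) (P1 (Iic m)) := by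
      refine le_min ?_ ?_
      · rw [← h0, Measure.map_apply measurable_fst measurableSet_Ioi]
        exact measure_mono fun p hp => hp.1
      · rw [← h1, Measure.map_apply measurable_snd measurableSet_Iic]
        exact measure_mono fun p hp => hp.2
    have hdisj : Disjoint (Iic m ×ˢ Ioi M) (Ioi M ×ˢ Iic m) := by
      rw [Set.disjoint_left]
      rintro p ⟨hp1, hp2⟩ ⟨hq1, hq2⟩
      simp only [mem_Iic, mem_Ioi] at *
      linarith
    have hunion : Jstar ((Iic m ×ˢ Ioi M) ∪ (Ioi M ×ˢ Iic m))
        = Jstar (Iic m ×ˢ Ioi M) + Jstar (Ioi M ×ˢ Iic m) :=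
      measure_union hdisj (measurableSet_Ioi.prod measurableSet_Iic)
    calc J ((Iic m ×ˢ Ioi M) ∪ (Ioi M ×ˢ Iic m))
        ≤ J (Iic m ×ˢ Ioi M) + J (Ioi M ×ˢ Iic m) := measure_union_le _ _
      _ ≤ min (P0 (Iic m)) (P1 (Ioi M)) + min (P0 (Ioi M)) (P1 (Iic m)) :=
          add_le_add hJ1 hJ2
      _ = Jstar (Iic m ×ˢ Ioi M) + Jstar (Ioi M ×ˢ Iic m) := by
          rw [hJstar, jstar_S1 P0 P1 m M, jstar_S2 P0 P1 m M]
      _ = _ := hunion.symm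
  have hchain : (∫⁻ p : ℝ × ℝ, ENNReal.ofReal ((p.2 - p.1) ^ 2) ∂J)
      ≤ ∫⁻ u in Ioo (0:ℝ) 1,
          ENNReal.ofReal ((quantile P1 u - quantile P0 (1 - u)) ^ 2) := by
    rw [← lintegral_jstar P0 P1, coupling_lintegral_eq J, coupling_lintegral_eq Jstar]
    exact lintegral_mono hcomp
  have hfin := lintegral_target_lt_top P0 P1 hm0 hm1
  have hJreal : (∫ p : ℝ × ℝ, (p.2 - p.1) ^ 2 ∂J)
      = (∫⁻ p : ℝ × ℝ, ENNReal.ofReal ((p.2 - p.1) ^ 2) ∂J).toReal := by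
    rw [integral_eq_lintegral_of_nonneg_ae (f := fun p : ℝ × ℝ => (p.2 - p.1) ^ 2) (ae_of_all _ fun p => sq_nonneg _)
      ((continuous_snd.sub continuous_fst).pow 2).aestronglyMeasurable]
  have hRreal : (∫ u in Ioo (0:ℝ) 1, (quantile P1 u - quantile P0 (1 - u)) ^ 2)
      = (∫⁻ u in Ioo (0:ℝ) 1,
          ENNReal.ofReal ((quantile P1 u - quantile P0 (1 - u)) ^ 2)).toReal := by
    rw [integral_eq_lintegral_of_nonneg_ae (f := fun u => (quantile P1 u - quantile P0 (1 - u)) ^ 2) (ae_of_all _ fun u => sq_nonneg _)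
      (((aemeasurable_quantile P1).sub
        (aemeasurable_quantile_one_sub P0)).pow_const 2).aestronglyMeasurable]
  constructor
  · rw [hJreal, hRreal]
    exact ENNReal.toReal_mono hfin.ne hchain
  · intro hJeq
    rw [hJeq, integral_map (aemeasurable_antitone P0 P1) (f := fun p : ℝ × ℝ => (p.2 - p.1) ^ 2)
      ((continuous_snd.sub continuous_fst).pow 2).aestronglyMeasurable]
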